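/- arXiv:2002.01305 — 2 statements merged into one kernel-verified Lean document; each statement's English description precedes it below -/
import Mathlib

section
/- Let K be a finite index set and let (A_k)_{k∈K} and (Â_k)_{k∈K} be families of n × m real matrices. Then ‖ ∑_{k∈K} ( Â_k Â_kᵀ − A_k A_kᵀ ) ‖₂ ≤ ∑_{k∈K} ‖Â_k − A_k‖₂² + 2 ( ∑_{k∈K} ‖A_k‖₂² )^{1/2} ( ∑_{k∈K} ‖Â_k − A_k‖₂² )^{1/2}. -/
open Matrix

/-- The spectral norm of a real matrix: the operator norm of the associated
linear map between Euclidean spaces, i.e. the largest singular value. -/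
noncomputable def matSpectralNorm {m n : Type*} [Fintype m] [Fintype n] [DecidableEq n]
    (M : Matrix m n ℝ) : ℝ :=
  ‖LinearMap.toContinuousLinearMap (Matrix.toEuclideanLin M)‖

section aux

open scoped Matrix.Norms.L2Operator

lemma spectralNorm_eq_norm {m n : Type*} [Fintype m] [Fintype n] [DecidableEq n]
    (M : Matrix m n ℝ) : matSpectralNorm M = ‖M‖ := rfl

lemma l2_norm_transpose {m n : Type*} [Fintype m] [Fintype n] [DecidableEq m] [DecidableEq n]
    (M : Matrix m n ℝ) : ‖Mᵀ‖ = ‖M‖ := by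
  rw [← conjTranspose_eq_transpose_of_trivial, Matrix.l2_opNorm_conjTranspose]

end aux

theorem spectral_norm_sum_outer_diff_bound
    (K : Type*) [Fintype K] (n m : ℕ)
    (A Ahat : K → Matrix (Fin n) (Fin m) ℝ) :
    matSpectralNorm (∑ k : K, (Ahat k * (Ahat k)ᵀ - A k * (A k)ᵀ)) ≤
      (∑ k : K, matSpectralNorm (Ahat k - A k) ^ 2) +
        2 * Real.sqrt (∑ k : K, matSpectralNorm (A k) ^ 2) *
          Real.sqrt (∑ k : K, matSpectralNorm (Ahat k - A k) ^ 2) := by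
  open scoped Matrix.Norms.L2Operator in
  simp only [spectralNorm_eq_norm]
  set E : K → Matrix (Fin n) (Fin m) ℝ := fun k => Ahat k - A k with hE
  have hdecomp : ∀ k : K, Ahat k * (Ahat k)ᵀ - A k * (A k)ᵀ
      = E k * (E k)ᵀ + A k * (E k)ᵀ + E k * (A k)ᵀ := by
    intro k
    simp only [hE, transpose_sub, Matrix.mul_sub, Matrix.sub_mul]
    abel
  have htri : ‖∑ k : K, (Ahat k * (Ahat k)ᵀ - A k * (A k)ᵀ)‖
      ≤ ∑ k : K, (‖E k‖ ^ 2 + 2 * (‖A k‖ * ‖E k‖)) := by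
    refine (norm_sum_le _ _).trans (Finset.sum_le_sum fun k _ => ?_)
    rw [hdecomp k]
    calc ‖E k * (E k)ᵀ + A k * (E k)ᵀ + E k * (A k)ᵀ‖
        ≤ ‖E k * (E k)ᵀ‖ + ‖A k * (E k)ᵀ‖ + ‖E k * (A k)ᵀ‖ :=
          (norm_add_le _ _).trans (by gcongr; exact norm_add_le _ _)
      _ ≤ ‖E k‖ * ‖(E k)ᵀ‖ + ‖A k‖ * ‖(E k)ᵀ‖ + ‖E k‖ * ‖(A k)ᵀ‖ := by
          gcongr <;> exact Matrix.l2_opNorm_mul _ _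
      _ = ‖E k‖ ^ 2 + 2 * (‖A k‖ * ‖E k‖) := by
          rw [l2_norm_transpose, l2_norm_transpose]; ring
  rw [Finset.sum_add_distrib] at htri
  refine htri.trans ?_
  gcongr
  rw [← Finset.mul_sum, mul_assoc]
  gcongr
  exact Real.sum_mul_le_sqrt_mul_sqrt _ _ _
end

section
/- Let U and V be linear subspaces of the Euclidean space ℝⁿ and let P_U and P_V denote the orthogonal projections of ℝⁿ onto U and V respectively, viewed as linear endomorphisms of ℝⁿ. Then tr(P_U ∘ P_V) = 0 if and only if U and V are orthogonal, i.e. ⟨u, v⟩ = 0 for every u ∈ U and v ∈ V. Consequently, the space distance D(U, V) = (1 − tr(P_U ∘ P_V)/max(dim U, dim V))^{1/2} equals 1 if and only if U ⟂ V. -/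
open Module

/-- The orthogonal projection onto a subspace of Euclidean space, as a linear
endomorphism of the ambient space. -/
noncomputable def projOn {n : ℕ} (U : Submodule ℝ (EuclideanSpace ℝ (Fin n))) :
    EuclideanSpace ℝ (Fin n) →ₗ[ℝ] EuclideanSpace ℝ (Fin n) :=
  U.subtype ∘ₗ (U.orthogonalProjectionOnto).toLinearMap

open scoped RealInnerProductSpace

lemma projOn_symm {n : ℕ} (U : Submodule ℝ (EuclideanSpace ℝ (Fin n)))
    (x y : EuclideanSpace ℝ (Fin n)) : ⟪projOn U x, y⟫ = ⟪x, projOn U y⟫ :=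
  U.inner_starProjection_left_eq_right x y

lemma projOn_mem {n : ℕ} (U : Submodule ℝ (EuclideanSpace ℝ (Fin n)))
    (x : EuclideanSpace ℝ (Fin n)) : projOn U x ∈ U :=
  (U.orthogonalProjectionOnto x).2

lemma projOn_of_mem {n : ℕ} {U : Submodule ℝ (EuclideanSpace ℝ (Fin n))}
    {x : EuclideanSpace ℝ (Fin n)} (hx : x ∈ U) : projOn U x = x := by
  exact U.starProjection_eq_self_iff.2 hx

lemma projOn_of_mem_orth {n : ℕ} {U : Submodule ℝ (EuclideanSpace ℝ (Fin n))}
    {x : EuclideanSpace ℝ (Fin n)} (hx : x ∈ Uᗮ) : projOn U x = 0 := by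
  simp [projOn, Submodule.orthogonalProjectionOnto_apply_of_mem_orthogonal hx]

lemma trace_eq_sum_inner {n : ℕ} (f : EuclideanSpace ℝ (Fin n) →ₗ[ℝ] EuclideanSpace ℝ (Fin n)) :
    LinearMap.trace ℝ _ f =
      ∑ i, ⟪(EuclideanSpace.basisFun (Fin n) ℝ) i, f ((EuclideanSpace.basisFun (Fin n) ℝ) i)⟫ := by
  rw [LinearMap.trace_eq_matrix_trace ℝ (EuclideanSpace.basisFun (Fin n) ℝ).toBasis, Matrix.trace]
  simp [Matrix.diag, LinearMap.toMatrix_apply, OrthonormalBasis.coe_toBasis_repr_apply,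
    OrthonormalBasis.repr_apply_apply, OrthonormalBasis.coe_toBasis]

theorem trace_comp_orthogonal_projections_eq_zero_iff
    (n : ℕ) (U V : Submodule ℝ (EuclideanSpace ℝ (Fin n))) :
    (LinearMap.trace ℝ _ (projOn U ∘ₗ projOn V) = 0 ↔
      ∀ u ∈ U, ∀ v ∈ V, inner ℝ u v = (0 : ℝ)) ∧
    (Real.sqrt (1 - LinearMap.trace ℝ _ (projOn U ∘ₗ projOn V) /
        (max (finrank ℝ U) (finrank ℝ V) : ℝ)) = 1 ↔
      ∀ u ∈ U, ∀ v ∈ V, inner ℝ u v = (0 : ℝ)) := by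
  set A := projOn U with hAdef
  set B := projOn V with hBdef
  set b := EuclideanSpace.basisFun (Fin n) ℝ with hb
  -- trace(A∘B) = trace((A∘B∘B)∘A)
  have h1 : LinearMap.trace ℝ _ (A ∘ₗ B) =
      LinearMap.trace ℝ _ ((A ∘ₗ (B ∘ₗ B)) ∘ₗ A) := by
    conv_rhs => rw [LinearMap.trace_comp_comm']
    congr 1
    refine LinearMap.ext fun x => ?_
    simp only [LinearMap.comp_apply]
    rw [projOn_of_mem (projOn_mem V _), projOn_of_mem (projOn_mem U _)]
  have h2 : LinearMap.trace ℝ _ (A ∘ₗ B) = ∑ i, ‖B (A (b i))‖ ^ 2 := by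
    rw [h1, trace_eq_sum_inner]
    refine Finset.sum_congr rfl fun i _ => ?_
    simp only [LinearMap.comp_apply]
    rw [← projOn_symm U, ← projOn_symm V, real_inner_self_eq_norm_sq]
  -- main characterization
  have hmain : LinearMap.trace ℝ _ (A ∘ₗ B) = 0 ↔
      ∀ u ∈ U, ∀ v ∈ V, inner ℝ u v = (0 : ℝ) := by
    constructor
    · intro h u hu v hv
      have hz : ∀ i, B (A (b i)) = 0 := by
        have := (Finset.sum_eq_zero_iff_of_nonneg
          (fun i _ => by positivity)).1 (h2 ▸ h)
        intro i
        have := this i (Finset.mem_univ i)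
        have : ‖B (A (b i))‖ = 0 := by
          have := sq_eq_zero_iff.1 this
          simpa using this
        simpa using this
      have hBA : ∀ x, B (A x) = 0 := by
        intro x
        have : (B ∘ₗ A) = 0 := by
          apply b.toBasis.ext
          intro i
          simpa using hz i
        simpa using LinearMap.congr_fun this x
      have : ⟪u, v⟫ = ⟪B (A u), v⟫ := by
        rw [projOn_of_mem hu]
        rw [projOn_symm V, projOn_of_mem hv]
      rw [this, hBA]
      simp
    · intro h
      have hBA : ∀ x, B (A x) = 0 := by
        intro x
        apply projOn_of_mem_orth
        rw [Submodule.mem_orthogonal]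
        intro v hv
        rw [real_inner_comm]
        exact h (A x) (projOn_mem U x) v hv
      rw [h2]
      apply Finset.sum_eq_zero
      intro i _
      rw [hBA]
      simp
  refine ⟨hmain, ?_⟩
  constructor
  · intro h
    have h1' : (1 : ℝ) - LinearMap.trace ℝ _ (A ∘ₗ B) /
        (max (finrank ℝ U) (finrank ℝ V) : ℝ) = 1 := by
      have := Real.sqrt_eq_one.1 h
      linarith [this]
    have hdiv : LinearMap.trace ℝ _ (A ∘ₗ B) /
        (max (finrank ℝ U) (finrank ℝ V) : ℝ) = 0 := by linarith
    rcases div_eq_zero_iff.1 hdiv with ht | hm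
    · exact hmain.1 ht
    · -- max of dims = 0, so U = ⊥
      have hU0 : finrank ℝ U = 0 := by
        have : (max (finrank ℝ U) (finrank ℝ V) : ℕ) = 0 := by exact_mod_cast hm
        omega
      have : U = ⊥ := Submodule.finrank_eq_zero.1 hU0
      intro u hu v hv
      rw [this, Submodule.mem_bot] at hu
      simp [hu]
  · intro h
    rw [hmain.2 h]
    simp
end
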